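/- Let α, β, γ be real numbers. If (T_α(x))² ≥ T_β(x) · T_γ(x) holds for all real x ≥ 1, then 2α² ≥ β² + γ², where T_δ(x) = ((x + √(x²−1))^δ + (x − √(x²−1))^δ)/2. -/
import Mathlib


/-- Generalized Chebyshev function `T_γ(x) = ((x + √(x²−1))^γ + (x − √(x²−1))^γ)/2`. -/
noncomputable def chebT (γ x : ℝ) : ℝ :=
  ((x + Real.sqrt (x ^ 2 - 1)) ^ γ + (x - Real.sqrt (x ^ 2 - 1)) ^ γ) / 2

lemma chebT_cosh (δ t : ℝ) (ht : 0 ≤ t) :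
    chebT δ (Real.cosh t) = Real.cosh (δ * t) := by
  have hsq : Real.sqrt (Real.cosh t ^ 2 - 1) = Real.sinh t := by
    rw [Real.cosh_sq]
    simp [Real.sqrt_sq (Real.sinh_nonneg_iff.2 ht)]
  have h1 : Real.cosh t + Real.sinh t = Real.exp t := Real.cosh_add_sinh t
  have h2 : Real.cosh t - Real.sinh t = Real.exp (-t) := Real.cosh_sub_sinh t
  have e1 : (Real.exp t) ^ δ = Real.exp (δ * t) := by
    rw [Real.rpow_def_of_pos (Real.exp_pos t), Real.log_exp, mul_comm]
  have e2 : (Real.exp (-t)) ^ δ = Real.exp (δ * (-t)) := by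
    rw [Real.rpow_def_of_pos (Real.exp_pos (-t)), Real.log_exp, mul_comm]
  unfold chebT
  rw [hsq, h1, h2, e1, e2, Real.cosh_eq]
  ring_nf

lemma one_add_sq_div_two_le_cosh (s : ℝ) : 1 + s ^ 2 / 2 ≤ Real.cosh s := by
  have key : ∀ u : ℝ, 0 ≤ u → 1 + u ^ 2 / 2 ≤ Real.cosh u := by
    intro u hu
    have h1 : Real.cosh u = 2 * Real.sinh (u / 2) ^ 2 + 1 := by
      have h0 := Real.cosh_two_mul (u / 2)
      have h2 : Real.cosh (u / 2) ^ 2 = Real.sinh (u / 2) ^ 2 + 1 := Real.cosh_sq (u / 2)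
      rw [show 2 * (u / 2) = u by ring] at h0
      rw [h0, h2]; ring
    have h3 : u / 2 ≤ Real.sinh (u / 2) :=
      Real.self_le_sinh_iff.2 (by linarith)
    have h4 : 0 ≤ u / 2 := by linarith
    nlinarith [sq_nonneg (Real.sinh (u / 2) - u / 2)]
  rcases le_or_gt 0 s with hs | hs
  · exact key s hs
  · have h5 := key (-s) (by linarith)
    rw [Real.cosh_neg] at h5
    nlinarith [h5]

lemma cosh_le_quad (s : ℝ) (hs : |s| ≤ 1) :
    Real.cosh s ≤ 1 + s ^ 2 / 2 + s ^ 4 / 2 := by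
  have h1 : Real.cosh s ≤ Real.exp (s ^ 2 / 2) := Real.cosh_le_exp_half_sq s
  have hs2 : s ^ 2 ≤ 1 := by nlinarith [sq_abs s, abs_nonneg s]
  have hu0 : (0:ℝ) ≤ s ^ 2 / 2 := by positivity
  have hu1 : s ^ 2 / 2 < 1 := by linarith
  have h2 : Real.exp (s ^ 2 / 2) ≤ 1 / (1 - s ^ 2 / 2) :=
    Real.exp_bound_div_one_sub_of_interval hu0 hu1
  have h4nn : (0:ℝ) ≤ s ^ 4 := by positivity
  have h6 : s ^ 6 ≤ s ^ 4 := by nlinarith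
  have h3 : 1 / (1 - s ^ 2 / 2) ≤ 1 + s ^ 2 / 2 + s ^ 4 / 2 := by
    rw [div_le_iff₀ (by linarith)]
    nlinarith
  linarith

lemma aux_cosh (a b c : ℝ)
    (key : ∀ t : ℝ, 0 ≤ t →
      Real.cosh (b * t) + Real.cosh (c * t) ≤ Real.cosh (a * t) + 1) :
    b ^ 2 + c ^ 2 ≤ a ^ 2 := by
  by_contra hcon
  push_neg at hcon
  have hεpos : 0 < (b ^ 2 + c ^ 2 - a ^ 2) / 2 := by linarith
  set ε := (b ^ 2 + c ^ 2 - a ^ 2) / 2 with hε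
  have ht0 : 0 < min (1 / (|a| + 1)) (Real.sqrt ε / (a ^ 2 + 1)) :=
    lt_min (by positivity) (by positivity)
  set t := min (1 / (|a| + 1)) (Real.sqrt ε / (a ^ 2 + 1)) with htdef
  have hapos : (0:ℝ) < |a| + 1 := by positivity
  have hat : |a * t| ≤ 1 := by
    have h1 : t ≤ 1 / (|a| + 1) := min_le_left _ _
    rw [abs_mul, abs_of_pos ht0]
    calc |a| * t ≤ |a| * (1 / (|a| + 1)) :=
          mul_le_mul_of_nonneg_left h1 (abs_nonneg a)
      _ ≤ 1 := by rw [mul_one_div, div_le_one hapos]; linarith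
  have ht2 : t ≤ Real.sqrt ε / (a ^ 2 + 1) := min_le_right _ _
  have hbound : a ^ 4 * t ^ 2 / 2 < ε := by
    have h1 : t ^ 2 ≤ (Real.sqrt ε / (a ^ 2 + 1)) ^ 2 := by
      apply sq_le_sq' _ ht2
      have : 0 < Real.sqrt ε / (a ^ 2 + 1) := by positivity
      linarith [ht0.le, htdef ▸ ht0]
    have h2 : (Real.sqrt ε / (a ^ 2 + 1)) ^ 2 = ε / (a ^ 2 + 1) ^ 2 := by
      rw [div_pow, Real.sq_sqrt hεpos.le]
    rw [h2] at h1
    have h4 : (0:ℝ) < (a ^ 2 + 1) ^ 2 := by positivity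
    have h5 : a ^ 4 * t ^ 2 ≤ (a ^ 2 + 1) ^ 2 * (ε / (a ^ 2 + 1) ^ 2) := by
      calc a ^ 4 * t ^ 2 ≤ (a ^ 2 + 1) ^ 2 * t ^ 2 := by nlinarith [sq_nonneg t, sq_nonneg a]
        _ ≤ (a ^ 2 + 1) ^ 2 * (ε / (a ^ 2 + 1) ^ 2) :=
            mul_le_mul_of_nonneg_left h1 h4.le
    rw [mul_div_cancel₀ _ (ne_of_gt h4)] at h5
    linarith
  have hK := key t ht0.le
  have hA : Real.cosh (a * t) ≤ 1 + (a * t) ^ 2 / 2 + (a * t) ^ 4 / 2 :=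
    cosh_le_quad (a * t) hat
  have hB : 1 + (b * t) ^ 2 / 2 ≤ Real.cosh (b * t) := one_add_sq_div_two_le_cosh (b * t)
  have hC : 1 + (c * t) ^ 2 / 2 ≤ Real.cosh (c * t) := one_add_sq_div_two_le_cosh (c * t)
  have eexp : (b * t) ^ 2 / 2 + (c * t) ^ 2 / 2 - (a * t) ^ 2 / 2
      = ε * t ^ 2 := by rw [hε]; ring
  have hmain : ε * t ^ 2 ≤ (a * t) ^ 4 / 2 := by
    rw [← eexp]; linarith
  have h7 : (a * t) ^ 4 / 2 = a ^ 4 * t ^ 2 / 2 * t ^ 2 := by ring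
  have ht2pos : 0 < t ^ 2 := by positivity
  have h8 : a ^ 4 * t ^ 2 / 2 * t ^ 2 < ε * t ^ 2 :=
    mul_lt_mul_of_pos_right hbound ht2pos
  linarith [hmain, h7 ▸ hmain]

theorem chebT_sq_ge_converse (α β γ : ℝ)
    (h : ∀ x : ℝ, 1 ≤ x → (chebT α x) ^ 2 ≥ chebT β x * chebT γ x) :
    2 * α ^ 2 ≥ β ^ 2 + γ ^ 2 := by
  have key : ∀ t : ℝ, 0 ≤ t →
      Real.cosh ((β + γ) * t) + Real.cosh ((β - γ) * t) ≤ Real.cosh (2 * α * t) + 1 := by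
    intro t ht
    have hx : (1:ℝ) ≤ Real.cosh t := Real.one_le_cosh t
    have H := h (Real.cosh t) hx
    rw [chebT_cosh α t ht, chebT_cosh β t ht, chebT_cosh γ t ht] at H
    have d1 : Real.cosh (2 * α * t) = 2 * Real.cosh (α * t) ^ 2 - 1 := by
      have h0 := Real.cosh_two_mul (α * t)
      have h2 : Real.cosh (α * t) ^ 2 = Real.sinh (α * t) ^ 2 + 1 := Real.cosh_sq (α * t)
      rw [show 2 * α * t = 2 * (α * t) by ring, h0, h2]; ring
    have d2 : Real.cosh ((β + γ) * t) + Real.cosh ((β - γ) * t)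
        = 2 * (Real.cosh (β * t) * Real.cosh (γ * t)) := by
      rw [show (β + γ) * t = β * t + γ * t by ring,
        show (β - γ) * t = β * t - γ * t by ring, Real.cosh_add, Real.cosh_sub]; ring
    rw [d1, d2]; linarith
  have := aux_cosh (2 * α) (β + γ) (β - γ) key
  nlinarith [this]
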